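/- Let C be a code over an alphabet A, and let Z_n, Q_n (n ≥ 1) be defined by the Lazard right length recurrence. Then for every n ≥ 1, both Z_n and Q_n are codes over A: whenever c_1⋯c_r = c'_1⋯c'_s with all c_i, c'_j ∈ Z_n (respectively all in Q_n), then r = s and c_i = c'_i for all i. -/

import Mathlib

/-- A code over the alphabet `A`: a set of nonempty words with unique
factorization. -/
def IsCode {A : Type*} (C : Set (FreeMonoid A)) : Prop :=
  (∀ c ∈ C, c ≠ 1) ∧
  ∀ l l' : List (FreeMonoid A),
    (∀ c ∈ l, c ∈ C) → (∀ c ∈ l', c ∈ C) → l.prod = l'.prod → l = l'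

/-- The sets `Z_n` of the Lazard right length recurrence associated to a code `C`:
`Z_1 = C`, `Z_{n+1} = (Z_n \ Q_n)·Q_n*` where `Q_n = {w ∈ Z_n : |w| = n}`.
(The value at `0` is junk, set to `∅`.) -/
def lazardZ {A : Type*} (C : Set (FreeMonoid A)) : ℕ → Set (FreeMonoid A)
  | 0 => ∅
  | 1 => C
  | (n + 2) =>
      {w | ∃ z ∈ lazardZ C (n + 1), z.length ≠ n + 1 ∧
        ∃ u ∈ Submonoid.closure
          {v | v ∈ lazardZ C (n + 1) ∧ v.length = n + 1}, w = z * u}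

/-- The sets `Q_n = Z_n ∩ A^n` of the Lazard right length recurrence. -/
def lazardQ {A : Type*} (C : Set (FreeMonoid A)) (n : ℕ) : Set (FreeMonoid A) :=
  {w | w ∈ lazardZ C n ∧ w.length = n}

namespace LazardAux

variable {A : Type*}

/-- A block: a word of `Z \ Q` followed by words of `Q`. -/
def IsBlock (Z Q : Set (FreeMonoid A)) (b : List (FreeMonoid A)) : Prop :=
  ∃ z t, b = z :: t ∧ z ∈ Z ∧ z ∉ Q ∧ ∀ q ∈ t, q ∈ Q

lemma IsCode.mono {C D : Set (FreeMonoid A)} (h : IsCode C) (hDC : D ⊆ C) : IsCode D :=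
  ⟨fun c hc => h.1 c (hDC hc),
   fun l l' hl hl' => h.2 l l' (fun c hc => hDC (hl c hc)) (fun c hc => hDC (hl' c hc))⟩

lemma headNotQ_join {Z Q : Set (FreeMonoid A)} :
    ∀ (L : List (List (FreeMonoid A))), (∀ b ∈ L, IsBlock Z Q b) →
      (L.flatten = [] ∨ ∃ h t, L.flatten = h :: t ∧ h ∉ Q)
  | [], _ => Or.inl rfl
  | b :: L, hL => by
      obtain ⟨z, t, rfl, _, hzQ, _⟩ := hL _ List.mem_cons_self
      exact Or.inr ⟨z, t ++ L.flatten, by simp, hzQ⟩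

lemma split_eq {Q : Set (FreeMonoid A)} :
    ∀ (qs qs' r r' : List (FreeMonoid A)),
      (∀ q ∈ qs, q ∈ Q) → (∀ q ∈ qs', q ∈ Q) →
      (r = [] ∨ ∃ h t, r = h :: t ∧ h ∉ Q) →
      (r' = [] ∨ ∃ h t, r' = h :: t ∧ h ∉ Q) →
      qs ++ r = qs' ++ r' → qs = qs' ∧ r = r'
  | [], [], r, r', _, _, _, _, h => ⟨rfl, h⟩
  | [], q' :: qs', r, r', _, hq', hr, _, h => by
      exfalso
      rcases hr with rfl | ⟨x, t, rfl, hxQ⟩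
      · simp at h
      · simp at h
        exact hxQ (h.1 ▸ hq' q' List.mem_cons_self)
  | q :: qs, [], r, r', hq, _, _, hr', h => by
      exfalso
      rcases hr' with rfl | ⟨x, t, rfl, hxQ⟩
      · simp at h
      · simp at h
        exact hxQ (h.1 ▸ hq q List.mem_cons_self)
  | q :: qs, q' :: qs', r, r', hq, hq', hr, hr', h => by
      simp only [List.cons_append, List.cons.injEq] at h
      obtain ⟨rfl, h2⟩ := h
      obtain ⟨h3, h4⟩ := split_eq qs qs' r r'
        (fun x hx => hq x (List.mem_cons_of_mem _ hx))
        (fun x hx => hq' x (List.mem_cons_of_mem _ hx)) hr hr' h2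
      exact ⟨by rw [h3], h4⟩

lemma blocks_eq {Z Q : Set (FreeMonoid A)} :
    ∀ (L L' : List (List (FreeMonoid A))),
      (∀ b ∈ L, IsBlock Z Q b) → (∀ b ∈ L', IsBlock Z Q b) →
      L.flatten = L'.flatten → L = L'
  | [], [], _, _, _ => rfl
  | [], b' :: L', _, hL', h => by
      obtain ⟨z, t, rfl, _, _, _⟩ := hL' _ List.mem_cons_self
      simp at h
  | b :: L, [], hL, _, h => by
      obtain ⟨z, t, rfl, _, _, _⟩ := hL _ List.mem_cons_self
      simp at h
  | b :: L, b' :: L', hL, hL', h => by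
      obtain ⟨z, t, rfl, _, hzQ, htQ⟩ := hL _ List.mem_cons_self
      obtain ⟨z', t', rfl, _, hzQ', htQ'⟩ := hL' _ List.mem_cons_self
      simp only [List.flatten_cons, List.cons_append, List.cons.injEq] at h
      obtain ⟨rfl, h2⟩ := h
      obtain ⟨rfl, h4⟩ := split_eq t t' L.flatten L'.flatten htQ htQ'
        (headNotQ_join L fun b hb => hL b (List.mem_cons_of_mem _ hb))
        (headNotQ_join L' fun b hb => hL' b (List.mem_cons_of_mem _ hb)) h2
      have := blocks_eq L L'
        (fun b hb => hL b (List.mem_cons_of_mem _ hb))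
        (fun b hb => hL' b (List.mem_cons_of_mem _ hb)) h4
      rw [this]

lemma exists_blocks {Z Q : Set (FreeMonoid A)} :
    ∀ (l : List (FreeMonoid A)),
      (∀ w ∈ l, w ∈ {w | ∃ z ∈ Z, z ∉ Q ∧ ∃ u ∈ Submonoid.closure Q, w = z * u}) →
      ∃ L : List (List (FreeMonoid A)), L.map List.prod = l ∧ ∀ b ∈ L, IsBlock Z Q b
  | [], _ => ⟨[], rfl, by simp⟩
  | w :: l, hl => by
      obtain ⟨z, hz, hzQ, u, hu, rfl⟩ := hl w List.mem_cons_self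
      obtain ⟨qs, hqs, hqsp⟩ := Submonoid.exists_list_of_mem_closure hu
      obtain ⟨L, hLm, hLb⟩ := exists_blocks l (fun x hx => hl x (List.mem_cons_of_mem _ hx))
      refine ⟨(z :: qs) :: L, ?_, ?_⟩
      · simp [hLm, hqsp]
      · intro b hb
        rcases List.mem_cons.mp hb with rfl | hb
        · exact ⟨z, qs, rfl, hz, hzQ, hqs⟩
        · exact hLb b hb

lemma code_elim {Z Q : Set (FreeMonoid A)} (hZ : IsCode Z) (hQZ : Q ⊆ Z) :
    IsCode {w | ∃ z ∈ Z, z ∉ Q ∧ ∃ u ∈ Submonoid.closure Q, w = z * u} := by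
  constructor
  · rintro w ⟨z, hz, -, u, -, rfl⟩ hw1
    have hz1 := hZ.1 z hz
    have hlen : (z * u).length = 0 := by rw [hw1]; rfl
    rw [FreeMonoid.length_mul] at hlen
    exact hz1 ((FreeMonoid.length_eq_zero.mp (Nat.eq_zero_of_add_eq_zero_right hlen)))
  · intro l l' hl hl' hprod
    obtain ⟨L, hLm, hLb⟩ := exists_blocks l hl
    obtain ⟨L', hLm', hLb'⟩ := exists_blocks l' hl'
    have hmemZ : ∀ (M : List (List (FreeMonoid A))), (∀ b ∈ M, IsBlock Z Q b) →
        ∀ c ∈ M.flatten, c ∈ Z := by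
      intro M hM c hc
      rw [List.mem_flatten] at hc
      obtain ⟨b, hb, hcb⟩ := hc
      obtain ⟨z, t, rfl, hz, _, ht⟩ := hM b hb
      rcases hcb with _ | hct
      · exact hz
      · exact hQZ (ht c (by assumption))
    have hjprod : L.flatten.prod = L'.flatten.prod := by
      rw [List.prod_flatten, List.prod_flatten, hLm, hLm', hprod]
    have hjoin : L.flatten = L'.flatten := hZ.2 _ _ (hmemZ L hLb) (hmemZ L' hLb') hjprod
    have hLL : L = L' := blocks_eq L L' hLb hLb' hjoin
    rw [← hLm, ← hLm', hLL]

end LazardAux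

/-- Each `Z_n` and each `Q_n` of the Lazard right length recurrence of a code
is again a code. -/
theorem lazardZ_isCode_and_lazardQ_isCode {A : Type*} (C : Set (FreeMonoid A))
    (hC : IsCode C) (n : ℕ) (hn : 1 ≤ n) :
    IsCode (lazardZ C n) ∧ IsCode (lazardQ C n) := by
  have key : ∀ m : ℕ, IsCode (lazardZ C (m + 1)) := by
    intro m
    induction m with
    | zero => exact hC
    | succ k ih =>
        have hset : lazardZ C (k + 2) =
            {w | ∃ z ∈ lazardZ C (k + 1), z ∉ lazardQ C (k + 1) ∧
              ∃ u ∈ Submonoid.closure (lazardQ C (k + 1)), w = z * u} := by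
          ext w
          constructor
          · rintro ⟨z, hz, hlen, u, hu, rfl⟩
            exact ⟨z, hz, fun hq => hlen hq.2, u, hu, rfl⟩
          · rintro ⟨z, hz, hq, u, hu, rfl⟩
            exact ⟨z, hz, fun hlen => hq ⟨hz, hlen⟩, u, hu, rfl⟩
        rw [hset]
        exact LazardAux.code_elim ih (fun v hv => hv.1)
  obtain ⟨m, rfl⟩ := Nat.exists_eq_add_of_le' hn
  have hZ := key m
  exact ⟨hZ, LazardAux.IsCode.mono hZ (fun v hv => hv.1)⟩
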